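/- If S is a compact subset of ℝ^d with reach(S) ≥ r > 0, then S is r-convex, i.e., S equals the intersection of the complements of all open balls of radius r that are disjoint from S. -/

import Mathlib

open Metric Set

/-- The `r`-convex hull: intersection of complements of all open balls of radius `r`
disjoint from `A`. -/
def rHull {d : ℕ} (r : ℝ) (A : Set (EuclideanSpace ℝ (Fin d))) :
    Set (EuclideanSpace ℝ (Fin d)) :=
  ⋂ y ∈ {y : EuclideanSpace ℝ (Fin d) | Metric.ball y r ∩ A = ∅}, (Metric.ball y r)ᶜ

/-- `S` is `r`-convex if it equals its `r`-convex hull. -/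
def RConvex {d : ℕ} (r : ℝ) (S : Set (EuclideanSpace ℝ (Fin d))) : Prop :=
  rHull r S = S

/-- `reach(S) ≥ r`: every point at distance `< r` from `S` has a unique nearest point
in `S`. -/
def ReachGe {d : ℕ} (S : Set (EuclideanSpace ℝ (Fin d))) (r : ℝ) : Prop :=
  ∀ x : EuclideanSpace ℝ (Fin d), Metric.infDist x S < r →
    ∃! y, y ∈ S ∧ dist x y = Metric.infDist x S

open scoped RealInnerProductSpace Topology

namespace RConvexProof

variable {d : ℕ}

local notation "E" => EuclideanSpace ℝ (Fin d)

lemma nonempty_of_reachGe {S : Set E} {r : ℝ} (hr : 0 < r) (hreach : ReachGe S r) :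
    S.Nonempty := by
  by_contra h
  rw [Set.not_nonempty_iff_eq_empty] at h
  subst h
  obtain ⟨y, ⟨hy, -⟩, -⟩ := hreach 0 (by simpa using hr)
  exact hy

lemma le_infDist' {S : Set E} (hne : S.Nonempty) {x : E} {b : ℝ}
    (h : ∀ y ∈ S, b ≤ dist x y) : b ≤ Metric.infDist x S := by
  by_contra hlt
  push_neg at hlt
  obtain ⟨y, hy, hd⟩ := (Metric.infDist_lt_iff hne).1 hlt
  exact absurd hd (not_lt.2 (h y hy))

/-- Almost-minimizers of the distance to `z` are close to the unique nearest point. -/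
lemma modulus {S : Set E} (hS : IsCompact S) {z q : E}
    (huniq : ∀ y ∈ S, dist z y = Metric.infDist z S → y = q)
    {γ : ℝ} (hγ : 0 < γ) :
    ∃ β > 0, ∀ s ∈ S, dist z s ≤ Metric.infDist z S + β → dist s q ≤ γ := by
  by_contra hcon
  push_neg at hcon
  choose s hsS hsd hsq using fun n : ℕ => hcon (1 / (n + 1)) (by positivity)
  obtain ⟨a, haS, φ, hφ, hconv⟩ := hS.tendsto_subseq hsS
  have h1 : Filter.Tendsto (fun n => dist z (s (φ n))) Filter.atTop (𝓝 (dist z a)) :=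
    Filter.Tendsto.dist tendsto_const_nhds hconv
  have h2 : Filter.Tendsto (fun n : ℕ => Metric.infDist z S + 1 / ((φ n : ℝ) + 1))
      Filter.atTop (𝓝 (Metric.infDist z S + 0)) :=
    Filter.Tendsto.add tendsto_const_nhds
      (tendsto_one_div_add_atTop_nhds_zero_nat.comp hφ.tendsto_atTop)
  have hda : dist z a ≤ Metric.infDist z S := by
    have := le_of_tendsto_of_tendsto' h1 h2 (fun n => hsd (φ n))
    simpa using this
  have haq : a = q := huniq a haS (le_antisymm hda (Metric.infDist_le_dist_of_mem haS))
  have h3 : Filter.Tendsto (fun n => dist (s (φ n)) q) Filter.atTop (𝓝 (dist a q)) :=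
    Filter.Tendsto.dist hconv tendsto_const_nhds
  have : γ ≤ dist a q := ge_of_tendsto h3 (Filter.Eventually.of_forall fun n => (hsq (φ n)).le)
  rw [haq, dist_self] at this
  linarith

lemma inner_le_of_nearest {S : Set E} {z q : E} (hqd : dist z q = Metric.infDist z S)
    {s : E} (hs : s ∈ S) : 2 * ⟪z - q, s - q⟫ ≤ ‖s - q‖ ^ 2 := by
  have h1 : dist z q ≤ dist z s := hqd.le.trans (Metric.infDist_le_dist_of_mem hs)
  have h2 : ‖z - q‖ ^ 2 ≤ ‖z - s‖ ^ 2 := by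
    rw [← dist_eq_norm, ← dist_eq_norm]
    exact pow_le_pow_left₀ dist_nonneg h1 2
  have h3 : ‖z - s‖ ^ 2 = ‖z - q‖ ^ 2 - 2 * ⟪z - q, s - q⟫ + ‖s - q‖ ^ 2 := by
    have : z - s = (z - q) - (s - q) := by abel
    rw [this, norm_sub_sq_real]
  linarith

lemma le_of_sq_le_sq {x y : ℝ} (h : x ^ 2 ≤ y ^ 2) (hx : 0 ≤ x) (hy : 0 ≤ y) : x ≤ y := by
  nlinarith

set_option maxHeartbeats 2000000 in
lemma step {S : Set E} {r : ℝ} (hS : IsCompact S) (hSne : S.Nonempty)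
    (hreach : ReachGe S r) {b u : E} (hb : b ∈ S) (hu : ‖u‖ = 1)
    {t ρ : ℝ} (ht0 : 0 < t) (htr : t < r) (hρdef : ρ = min t (r - t) / 2)
    (hft : Metric.infDist (b + t • u) S = t) :
    Metric.infDist (b + (t + ρ) • u) S = t + ρ := by
  have hρ0 : 0 < ρ := by rw [hρdef]; have := lt_min ht0 (by linarith : (0:ℝ) < r - t); linarith
  have hρt : ρ ≤ t / 2 := by rw [hρdef]; have := min_le_left t (r - t); linarith
  have hρr : ρ ≤ (r - t) / 2 := by rw [hρdef]; have := min_le_right t (r - t); linarith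
  obtain ⟨c, hc⟩ : ∃ c : E, c = b + t • u := ⟨_, rfl⟩
  rw [← hc] at hft
  have hcK : c ∈ closedBall c ρ := mem_closedBall_self hρ0.le
  obtain ⟨z, hzK, hzmax⟩ := (isCompact_closedBall c ρ).exists_isMaxOn ⟨c, hcK⟩
    ((continuous_infDist_pt S).continuousOn)
  obtain ⟨h, hh⟩ : ∃ h, Metric.infDist z S = h := ⟨_, rfl⟩
  have hmax : ∀ y ∈ closedBall c ρ, Metric.infDist y S ≤ h :=
    fun y hy => hh ▸ hzmax hy
  have hth : t ≤ h := by rw [← hft]; exact hmax c hcK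
  have hdzc : dist z c ≤ ρ := mem_closedBall.1 hzK
  have key : t + ρ ≤ h := by
    by_contra hlt
    push_neg at hlt
    have hhr : h < r := by linarith
    obtain ⟨q, ⟨hqS, hqd⟩, huniq'⟩ := hreach z (by rw [hh]; exact hhr)
    have huniq : ∀ y ∈ S, dist z y = Metric.infDist z S → y = q :=
      fun y hy hyd => huniq' y ⟨hy, hyd⟩
    rw [hh] at hqd
    have h0 : 0 < h := lt_of_lt_of_le ht0 hth
    have hzq : ‖z - q‖ = h := by rw [← dist_eq_norm]; exact hqd
    obtain ⟨n, hn⟩ : ∃ n : E, n = h⁻¹ • (z - q) := ⟨_, rfl⟩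
    have hnorm : ‖n‖ = 1 := by
      rw [hn, norm_smul, hzq, norm_inv, Real.norm_eq_abs, abs_of_pos h0, inv_mul_cancel₀ h0.ne']
    have hhn : h • n = z - q := by
      rw [hn, smul_smul, mul_inv_cancel₀ h0.ne', one_smul]
    obtain ⟨a, hadef⟩ : ∃ a : E, a = z - c := ⟨_, rfl⟩
    have hanorm : ‖a‖ ≤ ρ := by rw [hadef, ← dist_eq_norm]; exact hdzc
    obtain ⟨inn, hinndef⟩ : ∃ inn, ⟪n, a⟫ = inn := ⟨_, rfl⟩
    have hinnρ : inn ≤ ρ := by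
      rw [← hinndef]
      calc ⟪n, a⟫ ≤ ‖n‖ * ‖a‖ := real_inner_le_norm n a
        _ ≤ ρ := by rw [hnorm, one_mul]; exact hanorm
    by_cases hcase : ρ ≤ inn
    · -- boundary colinear case : a = ρ • n, and then q is too close to c
      have hinneq : inn = ρ := le_antisymm hinnρ hcase
      have haρn : a = ρ • n := by
        have hz2 : ‖a - ρ • n‖ ^ 2 ≤ 0 := by
          rw [norm_sub_sq_real, real_inner_smul_right, norm_smul, Real.norm_eq_abs,
            abs_of_pos hρ0, real_inner_comm, hinndef, hinneq]
          have h2 : ‖a‖ ^ 2 ≤ ρ ^ 2 := pow_le_pow_left₀ (norm_nonneg a) hanorm 2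
          rw [mul_pow, hnorm]
          ring_nf
          ring_nf at h2
          linarith [h2]
        have h4 : ‖a - ρ • n‖ ^ 2 = 0 := le_antisymm hz2 (sq_nonneg _)
        have h3 : ‖a - ρ • n‖ = 0 := by
          exact pow_eq_zero_iff (by norm_num) |>.1 h4
        exact sub_eq_zero.1 (norm_eq_zero.1 h3)
      have hq' : c - q = (h - ρ) • n := by
        have hzc : z - c = ρ • n := by rw [← hadef, haρn]
        have hcq : c - q = (z - q) - (z - c) := by abel
        rw [hcq, ← hhn, hzc, ← sub_smul]
      have hdcq : dist c q = h - ρ := by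
        rw [dist_eq_norm, hq', norm_smul, Real.norm_eq_abs, hnorm, mul_one,
          abs_of_pos (by linarith : (0:ℝ) < h - ρ)]
      have : t ≤ h - ρ := by
        rw [← hft, ← hdcq]; exact Metric.infDist_le_dist_of_mem hqS
      linarith
    · push_neg at hcase
      obtain ⟨η, hηdef⟩ : ∃ η, min (ρ - inn) ρ = η := ⟨_, rfl⟩
      have hη0 : 0 < η := hηdef ▸ lt_min (by linarith) hρ0
      have hηρ : η ≤ ρ := hηdef ▸ min_le_right _ _
      have hinnη : inn ≤ ρ - η := by
        have := hηdef ▸ min_le_left (ρ - inn) ρ; linarith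
      obtain ⟨γ, hγdef⟩ : ∃ γ, h * Real.sqrt (η / ρ) = γ := ⟨_, rfl⟩
      have hγ0 : 0 < γ := hγdef ▸ mul_pos h0 (Real.sqrt_pos.2 (div_pos hη0 hρ0))
      have hγ2 : γ ^ 2 = h ^ 2 * (η / ρ) := by
        rw [← hγdef, mul_pow, Real.sq_sqrt (div_pos hη0 hρ0).le]
      obtain ⟨β, hβ0, hmod⟩ := modulus hS huniq hγ0
      obtain ⟨μ, hμdef⟩ : ∃ μ, 1 - η / (2 * ρ) = μ := ⟨_, rfl⟩
      have hημ : η / (2 * ρ) ≤ 1 / 2 := by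
        rw [div_le_div_iff₀ (by linarith) (by norm_num)]; linarith
      have hμ1 : μ ≤ 1 := by
        rw [← hμdef]; have : 0 < η / (2 * ρ) := by positivity
        linarith
      have hμhalf : 1 / 2 ≤ μ := by rw [← hμdef]; linarith
      have hμ0 : 0 ≤ μ := by linarith
      obtain ⟨ε, hεdef⟩ : ∃ ε, min (β / 2) (η / 2) = ε := ⟨_, rfl⟩
      have hε0 : 0 < ε := hεdef ▸ lt_min (by linarith) (by linarith)
      have hεβ : ε ≤ β / 2 := hεdef ▸ min_le_left _ _
      have hεη : ε ≤ η / 2 := hεdef ▸ min_le_right _ _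
      obtain ⟨w, hw⟩ : ∃ w : E, w = z + ε • n := ⟨_, rfl⟩
      have hzw : dist z w = ε := by
        rw [dist_eq_norm', hw]
        have h1 : z + ε • n - z = ε • n := by abel
        rw [h1, norm_smul, Real.norm_eq_abs, hnorm, mul_one, abs_of_pos hε0]
      -- Claim 1 : every point of S is at distance ≥ h + ε μ from w
      have hC1 : ∀ s ∈ S, h + ε * μ ≤ dist w s := by
        intro s hs
        have hzs : h ≤ dist z s := hh ▸ Metric.infDist_le_dist_of_mem hs
        rcases le_or_gt (dist z s) (h + β) with hnear | hfar
        · have hsq : dist s q ≤ γ := hmod s hs (by rw [hh]; exact hnear)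
          have e1 : 2 * ⟪z - q, s - q⟫ ≤ ‖s - q‖ ^ 2 := inner_le_of_nearest (hh ▸ hqd) hs
          have hsq2 : ‖s - q‖ ^ 2 ≤ γ ^ 2 := by
            rw [← dist_eq_norm]
            exact pow_le_pow_left₀ dist_nonneg hsq 2
          have e2 : ⟪n, s - q⟫ ≤ γ ^ 2 / (2 * h) := by
            calc ⟪n, s - q⟫ = h⁻¹ * ⟪z - q, s - q⟫ := by rw [hn, real_inner_smul_left]
              _ ≤ h⁻¹ * (γ ^ 2 / 2) := by
                  apply mul_le_mul_of_nonneg_left _ (inv_nonneg.2 h0.le)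
                  linarith
              _ = γ ^ 2 / (2 * h) := by field_simp
          have e3 : ⟪n, z - q⟫ = h := by
            rw [hn, real_inner_smul_left, real_inner_self_eq_norm_sq, hzq]
            field_simp
          have e4 : h - γ ^ 2 / (2 * h) ≤ ⟪n, z - s⟫ := by
            have hzsplit : z - s = (z - q) - (s - q) := by abel
            rw [hzsplit, inner_sub_right, e3]
            linarith
          have e5 : ‖w - s‖ ^ 2 = ‖z - s‖ ^ 2 + 2 * ε * ⟪n, z - s⟫ + ε ^ 2 := by
            have hws : w - s = (z - s) + ε • n := by rw [hw]; abel
            rw [hws, norm_add_sq_real, real_inner_smul_right, norm_smul, Real.norm_eq_abs,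
              hnorm, mul_one, abs_of_pos hε0, real_inner_comm]
            ring
          have hμh : μ * h = h - γ ^ 2 / (2 * h) := by
            rw [← hμdef, hγ2]
            field_simp
          have hzs2 : h ^ 2 ≤ ‖z - s‖ ^ 2 := by
            rw [← dist_eq_norm]
            exact pow_le_pow_left₀ h0.le hzs 2
          have hp1 : 2 * ε * (μ * h) ≤ 2 * ε * ⟪n, z - s⟫ := by
            rw [hμh]
            apply mul_le_mul_of_nonneg_left e4 (by linarith)
          have hp2 : ε ^ 2 * μ ^ 2 ≤ ε ^ 2 :=
            mul_le_of_le_one_right (sq_nonneg ε) (pow_le_one₀ hμ0 hμ1)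
          have hgoal2 : (h + ε * μ) ^ 2 ≤ ‖w - s‖ ^ 2 := by
            have hexp : (h + ε * μ) ^ 2 = h ^ 2 + 2 * ε * (μ * h) + ε ^ 2 * μ ^ 2 := by ring
            rw [e5, hexp]
            linarith
          have hwsnn : 0 ≤ h + ε * μ := by positivity
          rw [dist_eq_norm]
          exact le_of_sq_le_sq hgoal2 hwsnn (norm_nonneg _)
        · have htr' : dist z s ≤ dist z w + dist w s := dist_triangle z w s
          have hεμε : ε * μ ≤ ε := mul_le_of_le_one_right hε0.le hμ1
          have : ε ≤ β - ε := by linarith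
          rw [hzw] at htr'
          linarith
      have hC2 : h + ε * μ ≤ Metric.infDist w S := le_infDist' hSne hC1
      -- project w back to the closed ball
      obtain ⟨N, hNdef⟩ : ∃ N, ‖w - c‖ = N := ⟨_, rfl⟩
      have hN0 : 0 ≤ N := hNdef ▸ norm_nonneg _
      obtain ⟨σ, hσdef⟩ : ∃ σ, min 1 (ρ / N) = σ := ⟨_, rfl⟩
      have hσ0 : 0 ≤ σ := hσdef ▸ le_min (by norm_num) (by positivity)
      have hσ1 : σ ≤ 1 := hσdef ▸ min_le_left _ _
      obtain ⟨z', hz'def⟩ : ∃ z' : E, z' = c + σ • (w - c) := ⟨_, rfl⟩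
      have hN2 : N ^ 2 ≤ ρ ^ 2 + 2 * ε * inn + ε ^ 2 := by
        have hwc : w - c = a + ε • n := by rw [hw, hadef]; abel
        have ha2 : ‖a‖ ^ 2 ≤ ρ ^ 2 := pow_le_pow_left₀ (norm_nonneg a) hanorm 2
        rw [← hNdef, hwc, norm_add_sq_real, real_inner_smul_right, norm_smul, Real.norm_eq_abs,
          hnorm, mul_one, abs_of_pos hε0, real_inner_comm, hinndef]
        ring_nf
        ring_nf at ha2
        linarith [ha2]
      obtain ⟨Λ, hΛdef⟩ : ∃ Λ, ε * (ρ - η) / ρ + ε ^ 2 / (2 * ρ) = Λ := ⟨_, rfl⟩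
      have hΛ0 : 0 ≤ Λ := by
        rw [← hΛdef]
        apply add_nonneg
        · apply div_nonneg _ hρ0.le
          apply mul_nonneg hε0.le (by linarith)
        · positivity
      have h2ρΛ : 2 * ρ * Λ = 2 * ε * (ρ - η) + ε ^ 2 := by
        rw [← hΛdef]; field_simp
      have hNρΛ : N ≤ ρ + Λ := by
        apply le_of_sq_le_sq _ hN0 (by linarith)
        have hei : ε * inn ≤ ε * (ρ - η) := mul_le_mul_of_nonneg_left hinnη hε0.le
        have hsq : N ^ 2 ≤ ρ ^ 2 + 2 * ρ * Λ := by rw [h2ρΛ]; linarith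
        have hexp : (ρ + Λ) ^ 2 = ρ ^ 2 + 2 * ρ * Λ + Λ ^ 2 := by ring
        rw [hexp]
        linarith [sq_nonneg Λ]
      have hz'K : z' ∈ closedBall c ρ := by
        rw [mem_closedBall, dist_eq_norm, hz'def]
        have h1 : c + σ • (w - c) - c = σ • (w - c) := by abel
        rw [h1, norm_smul, Real.norm_eq_abs, abs_of_nonneg hσ0, hNdef]
        rcases eq_or_lt_of_le hN0 with hN | hN
        · rw [← hN]; simpa using hρ0.le
        · have hle : σ ≤ ρ / N := hσdef ▸ min_le_right _ _
          calc σ * N ≤ (ρ / N) * N := mul_le_mul_of_nonneg_right hle hN0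
            _ = ρ := by field_simp
      have hwz' : dist w z' ≤ Λ := by
        have hsub : w - z' = (1 - σ) • (w - c) := by
          rw [hz'def, sub_smul, one_smul]
          abel
        rw [dist_eq_norm, hsub, norm_smul, Real.norm_eq_abs, abs_of_nonneg (by linarith), hNdef]
        rcases le_or_gt N ρ with h1 | h1
        · rcases eq_or_lt_of_le hN0 with hN | hN
          · rw [← hN]; simpa using hΛ0
          · have hσeq : σ = 1 := by
              rw [← hσdef, min_eq_left]
              rw [le_div_iff₀ hN]; linarith
            rw [hσeq, show ((1:ℝ) - 1) * N = 0 from by ring]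
            exact hΛ0
        · have hσeq : σ = ρ / N := by
            rw [← hσdef, min_eq_right]
            rw [div_le_one (by linarith)]; linarith
          rw [hσeq]
          have h2 : (1 - ρ / N) * N = N - ρ := by
            rw [sub_mul, one_mul, div_mul_cancel₀ _ (by linarith : N ≠ 0)]
          rw [h2]; linarith
      have hbad : Metric.infDist z' S ≤ h := hmax z' hz'K
      have hlow : Metric.infDist w S ≤ Metric.infDist z' S + dist w z' :=
        Metric.infDist_le_infDist_add_dist
      have hcontra : Λ < ε * μ := by
        have hεη' : ε < η := by linarith
        have h2 : 2 * ρ * (ε * μ) = 2 * ε * ρ - ε * η := by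
          rw [← hμdef]; field_simp
        have h3 : 2 * ρ * Λ < 2 * ρ * (ε * μ) := by
          rw [h2ρΛ, h2]
          have := mul_lt_mul_of_pos_left hεη' hε0
          ring_nf
          ring_nf at this
          linarith
        exact lt_of_mul_lt_mul_left h3 (by linarith : (0:ℝ) ≤ 2 * ρ)
      linarith
  -- now conclude equality and identify the maximizer
  have hhle : h ≤ t + ρ := by
    rw [← hh]
    calc Metric.infDist z S ≤ Metric.infDist c S + dist z c := Metric.infDist_le_infDist_add_dist
      _ ≤ t + ρ := by rw [hft]; linarith
  have heq : h = t + ρ := le_antisymm hhle key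
  have hdcb : dist c b = t := by
    rw [hc, dist_eq_norm]
    have h1 : b + t • u - b = t • u := by abel
    rw [h1, norm_smul, Real.norm_eq_abs, hu, mul_one, abs_of_pos ht0]
  have hdzb : dist z b = t + ρ := by
    have h1 : dist z b ≤ dist z c + dist c b := dist_triangle z c b
    have h2 : t + ρ ≤ dist z b := by
      rw [← heq, ← hh]; exact Metric.infDist_le_dist_of_mem hb
    rw [hdcb] at h1
    linarith
  -- z = c + ρ • u
  have hzcu : z = c + ρ • u := by
    have hzb : z - b = (z - c) + t • u := by rw [hc]; abel
    have hA : ‖z - c‖ ≤ ρ := by rw [← dist_eq_norm]; exact hdzc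
    have hkey : (t + ρ) ^ 2 = ‖z - c‖ ^ 2 + 2 * t * ⟪z - c, u⟫ + t ^ 2 := by
      have h1 : ‖z - b‖ = t + ρ := by rw [← dist_eq_norm]; exact hdzb
      rw [← h1, hzb, norm_add_sq_real, real_inner_smul_right, norm_smul, Real.norm_eq_abs,
        hu, mul_one, abs_of_pos ht0]
      ring
    have hB : ⟪z - c, u⟫ ≤ ‖z - c‖ := by
      calc ⟪z - c, u⟫ ≤ ‖z - c‖ * ‖u‖ := real_inner_le_norm _ _
        _ = ‖z - c‖ := by rw [hu, mul_one]
    have hA2 : ‖z - c‖ ^ 2 ≤ ρ ^ 2 := pow_le_pow_left₀ (norm_nonneg _) hA 2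
    have hBρ : ρ ≤ ⟪z - c, u⟫ := by
      have h2 : 2 * t * ρ ≤ 2 * t * ⟪z - c, u⟫ := by nlinarith [hkey, hA2]
      exact le_of_mul_le_mul_left h2 (by linarith)
    have hz0 : ‖z - c - ρ • u‖ ^ 2 ≤ 0 := by
      rw [norm_sub_sq_real, real_inner_smul_right, norm_smul, Real.norm_eq_abs,
        abs_of_pos hρ0, hu, mul_one]
      have h5 : ρ * ρ ≤ ρ * ⟪z - c, u⟫ := mul_le_mul_of_nonneg_left hBρ hρ0.le
      ring_nf
      ring_nf at hA2 h5
      linarith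
    have h4' : ‖z - c - ρ • u‖ ^ 2 = 0 := le_antisymm hz0 (sq_nonneg _)
    have h3 : ‖z - c - ρ • u‖ = 0 := pow_eq_zero_iff (by norm_num) |>.1 h4'
    have h4 : z - c = ρ • u := sub_eq_zero.1 (norm_eq_zero.1 h3)
    rw [← h4]; abel
  have hfin : b + (t + ρ) • u = z := by
    rw [hzcu, hc, add_smul]; abel
  rw [hfin, hh, heq]
lemma norm_smul_unit {u : E} (hu : ‖u‖ = 1) (x : ℝ) : ‖x • u‖ = |x| := by
  rw [norm_smul, Real.norm_eq_abs, hu, mul_one]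

set_option maxHeartbeats 1000000 in
lemma down {S : Set E} {b u : E} (hb : b ∈ S) (hu : ‖u‖ = 1) {a t : ℝ}
    (hfa : Metric.infDist (b + a • u) S = a) (ht0 : 0 ≤ t) (hta : t ≤ a) :
    Metric.infDist (b + t • u) S = t := by
  have hup : Metric.infDist (b + t • u) S ≤ t := by
    have e1 : b + t • u - b = t • u := by abel
    have h1 : dist (b + t • u) b = t := by
      rw [dist_eq_norm, e1, norm_smul_unit hu, abs_of_nonneg ht0]
    exact le_trans (Metric.infDist_le_dist_of_mem hb) h1.le
  have hdown : t ≤ Metric.infDist (b + t • u) S := by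
    have e2 : b + a • u - (b + t • u) = (a - t) • u := by rw [sub_smul]; abel
    have h2 : dist (b + a • u) (b + t • u) = a - t := by
      rw [dist_eq_norm, e2, norm_smul_unit hu, abs_of_nonneg (by linarith)]
    have h3 := Metric.infDist_le_infDist_add_dist (x := b + a • u) (y := b + t • u) (s := S)
    rw [hfa, h2] at h3
    linarith
  linarith

set_option maxHeartbeats 1000000 in
lemma ray {S : Set E} {r : ℝ} (hS : IsCompact S) (hSne : S.Nonempty)
    (hreach : ReachGe S r) {b u : E} (hb : b ∈ S) (hu : ‖u‖ = 1)
    {δ : ℝ} (hδ0 : 0 < δ) (hδr : δ < r)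
    (hfδ : Metric.infDist (b + δ • u) S = δ) :
    ∀ t, δ ≤ t → t < r → Metric.infDist (b + t • u) S = t := by
  intro t hδt htr
  set A := {s : ℝ | δ ≤ s ∧ s < r ∧ Metric.infDist (b + s • u) S = s} with hA
  have hAδ : δ ∈ A := ⟨le_refl δ, hδr, hfδ⟩
  have hAne : A.Nonempty := ⟨δ, hAδ⟩
  have hbdd : BddAbove A := ⟨r, fun s hs => hs.2.1.le⟩
  have hTA : δ ≤ sSup A := le_csSup hbdd hAδ
  have hTr : sSup A ≤ r := csSup_le hAne (fun s hs => hs.2.1.le)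
  have hsup : sSup A = r := by
    by_contra hne
    have hTltr : sSup A < r := lt_of_le_of_ne hTr hne
    have hfT : Metric.infDist (b + sSup A • u) S = sSup A := by
      have hg : Continuous fun s : ℝ => Metric.infDist (b + s • u) S - s := by
        exact ((Metric.continuous_infDist_pt S).comp
          (continuous_const.add (continuous_id.smul continuous_const))).sub continuous_id
      have hclosed : IsClosed {s : ℝ | Metric.infDist (b + s • u) S - s = 0} :=
        isClosed_eq hg continuous_const
      have hsub : A ⊆ {s : ℝ | Metric.infDist (b + s • u) S - s = 0} := by
        intro s hs; simp only [mem_setOf_eq, hs.2.2, sub_self]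
      have hmem : sSup A ∈ {s : ℝ | Metric.infDist (b + s • u) S - s = 0} :=
        closure_minimal hsub hclosed (csSup_mem_closure hAne hbdd)
      have := hmem
      simp only [mem_setOf_eq, sub_eq_zero] at this
      exact this
    have hT0 : 0 < sSup A := lt_of_lt_of_le hδ0 hTA
    have hρ0 : 0 < min (sSup A) (r - sSup A) / 2 := by
      have := lt_min hT0 (by linarith : (0:ℝ) < r - sSup A); linarith
    have hstep := step hS hSne hreach hb hu hT0 hTltr rfl hfT
    have hmem2 : sSup A + min (sSup A) (r - sSup A) / 2 ∈ A := by
      refine ⟨by linarith, ?_, hstep⟩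
      have := min_le_right (sSup A) (r - sSup A)
      linarith
    have := le_csSup hbdd hmem2
    linarith
  obtain ⟨a, haA, hta⟩ := exists_lt_of_lt_csSup hAne (hsup ▸ htr)
  exact down hb hu haA.2.2 (le_trans hδ0.le hδt) hta.le

end RConvexProof

open RConvexProof in
set_option maxHeartbeats 2000000 in
theorem reach_ge_implies_rConvex {d : ℕ} {S : Set (EuclideanSpace ℝ (Fin d))} {r : ℝ}
    (hS : IsCompact S) (hr : 0 < r) (hreach : ReachGe S r) :
    RConvex r S := by
  have hSne : S.Nonempty := nonempty_of_reachGe hr hreach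
  rw [RConvex]
  apply Set.Subset.antisymm
  · -- rHull ⊆ S
    intro x hx
    by_contra hxS
    -- we find an open ball of radius r through x missing S
    have hball : ∃ y, Metric.ball y r ∩ S = ∅ ∧ x ∈ Metric.ball y r := by
      rcases le_or_gt r (Metric.infDist x S) with hc | hc
      · refine ⟨x, ?_, mem_ball_self hr⟩
        ext s
        simp only [mem_inter_iff, mem_ball, mem_empty_iff_false, iff_false, not_and]
        intro hds hsS
        have := Metric.infDist_le_dist_of_mem (x := x) hsS
        rw [dist_comm] at hds
        linarith
      · obtain ⟨q, ⟨hqS, hqd⟩, -⟩ := hreach x hc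
        set δ := Metric.infDist x S with hδ
        have hδ0 : 0 < δ := by
          rcases lt_or_eq_of_le (Metric.infDist_nonneg (s := S) (x := x)) with h | h
          · exact h
          · exfalso
            have hdq : dist x q = 0 := by rw [hqd, hδ, ← h]
            have hxq : x = q := dist_eq_zero.1 hdq
            rw [← hxq] at hqS
            exact hxS hqS
        have hxq : ‖x - q‖ = δ := by rw [← dist_eq_norm, hqd]
        obtain ⟨u, hu⟩ : ∃ u : EuclideanSpace ℝ (Fin d), u = δ⁻¹ • (x - q) := ⟨_, rfl⟩
        have hunorm : ‖u‖ = 1 := by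
          rw [hu, norm_smul, Real.norm_eq_abs, abs_of_pos (inv_pos.2 hδ0), hxq,
            inv_mul_cancel₀ hδ0.ne']
        have hqδu : q + δ • u = x := by
          rw [hu, smul_smul, mul_inv_cancel₀ hδ0.ne', one_smul]
          abel
        have hfδ : Metric.infDist (q + δ • u) S = δ := by rw [hqδu]
        have hray := ray hS hSne hreach hqS hunorm hδ0 hc hfδ
        refine ⟨q + r • u, ?_, ?_⟩
        · ext s
          simp only [mem_inter_iff, mem_ball, mem_empty_iff_false, iff_false, not_and]
          intro hds hsS
          rw [dist_comm] at hds
          -- dist (q + r•u) s ≥ 2 a - r for every a ∈ [δ, r)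
          have hkey : ∀ a, δ ≤ a → a < r → 2 * a - r ≤ dist (q + r • u) s := by
            intro a haδ har
            have e1 : q + r • u - (q + a • u) = (r - a) • u := by rw [sub_smul]; abel
            have h1 : dist (q + r • u) (q + a • u) = r - a := by
              rw [dist_eq_norm, e1, norm_smul_unit hunorm, abs_of_nonneg (by linarith)]
            have h2 : a ≤ dist (q + a • u) s :=
              le_trans (hray a haδ har).symm.le (Metric.infDist_le_dist_of_mem hsS)
            have h3 := dist_triangle (q + a • u) (q + r • u) s
            rw [dist_comm (q + a • u) (q + r • u), h1] at h3
            linarith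
          -- choose a close enough to r
          obtain ⟨a, haδ, har, hgt⟩ : ∃ a, δ ≤ a ∧ a < r ∧ dist (q + r • u) s < 2 * a - r := by
            refine ⟨max δ ((dist (q + r • u) s + 3 * r) / 4), le_max_left _ _, ?_, ?_⟩
            · apply max_lt hc
              linarith
            · have := le_max_right δ ((dist (q + r • u) s + 3 * r) / 4)
              linarith
          exact absurd (hkey a haδ har) (not_le.2 hgt)
        · have e3 : q + δ • u - (q + r • u) = (δ - r) • u := by rw [sub_smul]; abel
          rw [mem_ball, ← hqδu, dist_eq_norm, e3, norm_smul_unit hunorm,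
            abs_of_neg (by linarith)]
          linarith
    obtain ⟨y, hy, hxy⟩ := hball
    rw [rHull] at hx
    have := Set.mem_iInter₂.1 hx y hy
    exact this hxy
  · -- S ⊆ rHull
    intro s hs
    rw [rHull]
    apply Set.mem_iInter₂.2
    intro y hy
    intro hmem
    have : s ∈ Metric.ball y r ∩ S := ⟨hmem, hs⟩
    rw [hy] at this
    exact this
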